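/- Let A be an invertible m×m real matrix, A_s a p×p real matrix, G a p×m real matrix, B a q×p real matrix, and suppose S₁ = A_s + G A⁻¹ Gᵀ and S₂ = B S₁⁻¹ Bᵀ are invertible (so in particular q ≤ p). Define the block lower-triangular preconditioner M₂ = [[A, 0, 0], [G, S₁, 0], [0, 0, S₂]]. Then the characteristic polynomial of M₂⁻¹K is det(λI − M₂⁻¹K) = (λ − 1)^m · (λ + 1)^{p−q} · (λ² + λ − 1)^q; equivalently, the eigenvalues of M₂⁻¹K are 1 with algebraic multiplicity m, −1 with algebraic multiplicity p − q, and (−1 + √5)/2 and (−1 − √5)/2 each with algebraic multiplicity q. -/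

import Mathlib

open Matrix Polynomial

/-- Assemble a 3×3 block matrix from its nine blocks. -/
noncomputable def blk3 {m p q : Type*}
    (M11 : Matrix m m ℝ) (M12 : Matrix m p ℝ) (M13 : Matrix m q ℝ)
    (M21 : Matrix p m ℝ) (M22 : Matrix p p ℝ) (M23 : Matrix p q ℝ)
    (M31 : Matrix q m ℝ) (M32 : Matrix q p ℝ) (M33 : Matrix q q ℝ) :
    Matrix (m ⊕ (p ⊕ q)) (m ⊕ (p ⊕ q)) ℝ :=
  Matrix.fromBlocks M11 (Matrix.fromCols M12 M13)
    (Matrix.fromRows M21 M31) (Matrix.fromBlocks M22 M23 M32 M33)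

lemma blk3_mul {m p q : Type*} [Fintype m] [Fintype p] [Fintype q]
    (A11 : Matrix m m ℝ) (A12 : Matrix m p ℝ) (A13 : Matrix m q ℝ)
    (A21 : Matrix p m ℝ) (A22 : Matrix p p ℝ) (A23 : Matrix p q ℝ)
    (A31 : Matrix q m ℝ) (A32 : Matrix q p ℝ) (A33 : Matrix q q ℝ)
    (B11 : Matrix m m ℝ) (B12 : Matrix m p ℝ) (B13 : Matrix m q ℝ)
    (B21 : Matrix p m ℝ) (B22 : Matrix p p ℝ) (B23 : Matrix p q ℝ)
    (B31 : Matrix q m ℝ) (B32 : Matrix q p ℝ) (B33 : Matrix q q ℝ) :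
    blk3 A11 A12 A13 A21 A22 A23 A31 A32 A33 * blk3 B11 B12 B13 B21 B22 B23 B31 B32 B33 =
    blk3 (A11*B11 + A12*B21 + A13*B31) (A11*B12 + A12*B22 + A13*B32) (A11*B13 + A12*B23 + A13*B33)
         (A21*B11 + A22*B21 + A23*B31) (A21*B12 + A22*B22 + A23*B32) (A21*B13 + A22*B23 + A23*B33)
         (A31*B11 + A32*B21 + A33*B31) (A31*B12 + A32*B22 + A33*B32) (A31*B13 + A32*B23 + A33*B33) := by
  ext (i|i|i) (j|j|j) <;>
    simp [blk3, mul_apply, fromBlocks, fromCols, fromRows_apply_inl, fromRows_apply_inr, Fintype.sum_sum_type,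
      Finset.sum_add_distrib] <;> ring

lemma blk3_one {m p q : Type*} [DecidableEq m] [DecidableEq p] [DecidableEq q] :
    blk3 (1 : Matrix m m ℝ) 0 0 0 (1 : Matrix p p ℝ) 0 0 0 (1 : Matrix q q ℝ) = 1 := by
  ext (i|i|i) (j|j|j) <;>
    simp [blk3, fromBlocks, fromCols, fromRows_apply_inl, fromRows_apply_inr, Matrix.one_apply]

lemma charmatrix_smul_one {n : Type*} [DecidableEq n] [Fintype n] (a : ℝ) :
    charmatrix (a • (1 : Matrix n n ℝ)) = (X - C a) • (1 : Matrix n n ℝ[X]) := by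
  ext i j
  by_cases h : i = j
  · subst h
    simp [charmatrix_apply_eq, Matrix.one_apply]
  · simp [charmatrix_apply_ne _ _ _ h, Matrix.one_apply, h]

lemma det_smul_one {n : Type*} {R : Type*} [CommRing R] [DecidableEq n] [Fintype n] (c : R) :
    Matrix.det (c • (1 : Matrix n n R)) = c ^ Fintype.card n := by
  rw [Matrix.det_smul, Matrix.det_one, mul_one]

/-- the characteristic polynomial of `M₂⁻¹ K` is
`(λ − 1)^m (λ + 1)^(p−q) (λ² + λ − 1)^q`. -/
theorem stmt4 (m p q : ℕ)
    (A : Matrix (Fin m) (Fin m) ℝ) (As : Matrix (Fin p) (Fin p) ℝ)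
    (G : Matrix (Fin p) (Fin m) ℝ) (B : Matrix (Fin q) (Fin p) ℝ)
    (S1 : Matrix (Fin p) (Fin p) ℝ) (S2 : Matrix (Fin q) (Fin q) ℝ)
    (hS1def : S1 = As + G * A⁻¹ * Gᵀ) (hS2def : S2 = B * S1⁻¹ * Bᵀ)
    (hA : IsUnit A) (hS1 : IsUnit S1) (hS2 : IsUnit S2)
    (K M2 : Matrix (Fin m ⊕ (Fin p ⊕ Fin q)) (Fin m ⊕ (Fin p ⊕ Fin q)) ℝ)
    (hK : K = blk3 A Gᵀ 0 G (-As) Bᵀ 0 B 0)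
    (hM2 : M2 = blk3 A 0 0 G S1 0 0 0 S2) :
    (M2⁻¹ * K).charpoly =
      (X - 1) ^ m * (X + 1) ^ (p - q) * (X ^ 2 + X - 1) ^ q := by
  have hAdet : IsUnit A.det := (Matrix.isUnit_iff_isUnit_det _).mp hA
  have hS1det : IsUnit S1.det := (Matrix.isUnit_iff_isUnit_det _).mp hS1
  have hS2det : IsUnit S2.det := (Matrix.isUnit_iff_isUnit_det _).mp hS2
  -- q ≤ p
  have hqp : q ≤ p := by
    calc q = Fintype.card (Fin q) := (Fintype.card_fin q).symm
      _ = S2.rank := (Matrix.rank_of_isUnit _ hS2).symm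
      _ = (B * (S1⁻¹ * Bᵀ)).rank := by rw [hS2def, Matrix.mul_assoc]
      _ ≤ B.rank := Matrix.rank_mul_le_left _ _
      _ ≤ Fintype.card (Fin p) := Matrix.rank_le_card_width B
      _ = p := Fintype.card_fin p
  -- the inverse of M2
  have hMinv : M2⁻¹ = blk3 A⁻¹ 0 0 (-(S1⁻¹*(G*A⁻¹))) S1⁻¹ 0 0 0 S2⁻¹ := by
    apply Matrix.inv_eq_right_inv
    rw [hM2, blk3_mul, Matrix.mul_nonsing_inv _ hAdet, Matrix.mul_nonsing_inv _ hS1det,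
      Matrix.mul_nonsing_inv _ hS2det, ← blk3_one]
    have h21 : S1 * (S1⁻¹ * (G * A⁻¹)) = G * A⁻¹ := by
      rw [← Matrix.mul_assoc, Matrix.mul_nonsing_inv _ hS1det, Matrix.one_mul]
    simp [h21]
  -- the preconditioned matrix
  have hT : M2⁻¹ * K = blk3 1 (A⁻¹*Gᵀ) 0 0 (-1) (S1⁻¹*Bᵀ) 0 (S2⁻¹*B) 0 := by
    rw [hMinv, hK, blk3_mul]
    have h11 : A⁻¹ * A = 1 := Matrix.nonsing_inv_mul _ hAdet
    have h21 : S1⁻¹ * (G * A⁻¹) * A = S1⁻¹ * G := by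
      rw [Matrix.mul_assoc, Matrix.mul_assoc, h11, Matrix.mul_one]
    have h22 : S1⁻¹ * (G * A⁻¹) * Gᵀ + S1⁻¹ * As = 1 := by
      rw [Matrix.mul_assoc, ← Matrix.mul_add, add_comm (G * A⁻¹ * Gᵀ) As, ← hS1def,
        Matrix.nonsing_inv_mul _ hS1det]
    congr 1 <;> simp [h11, h21]
    rw [show -(S1⁻¹ * (G * A⁻¹) * Gᵀ) + -(S1⁻¹ * As) = (-1 : Matrix (Fin p) (Fin p) ℝ) by
      rw [← neg_add, h22]]
  rw [hT]
  -- split off the identity block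
  have hzero : (fromRows (0 : Matrix (Fin p) (Fin m) ℝ) (0 : Matrix (Fin q) (Fin m) ℝ)) = 0 :=
    fromRows_zero
  rw [show blk3 1 (A⁻¹*Gᵀ) 0 0 (-1) (S1⁻¹*Bᵀ) 0 (S2⁻¹*B) 0 =
      fromBlocks 1 (fromCols (A⁻¹*Gᵀ) 0) 0
        (fromBlocks (-1) (S1⁻¹*Bᵀ) (S2⁻¹*B) 0) by rw [blk3, hzero]]
  rw [Matrix.charpoly_fromBlocks_zero₂₁]
  -- charpoly of the identity block
  have hcp1 : (1 : Matrix (Fin m) (Fin m) ℝ).charpoly = (X - 1) ^ m := by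
    rw [Matrix.charpoly, show (1 : Matrix (Fin m) (Fin m) ℝ) = (1:ℝ) • 1 by rw [one_smul],
      charmatrix_smul_one, det_smul_one, Fintype.card_fin, Polynomial.C_1]
  -- charpoly of the lower 2x2 block
  set u : Matrix (Fin p) (Fin q) ℝ[X] := (S1⁻¹*Bᵀ).map C with hu
  set v : Matrix (Fin q) (Fin p) ℝ[X] := (S2⁻¹*B).map C with hv
  have hVU : (S2⁻¹*B) * (S1⁻¹*Bᵀ) = 1 := by
    rw [Matrix.mul_assoc S2⁻¹ B (S1⁻¹ * Bᵀ), ← Matrix.mul_assoc B S1⁻¹ Bᵀ, ← hS2def,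
      Matrix.nonsing_inv_mul _ hS2det]
  have hvu : v * u = 1 := by
    rw [hu, hv, ← Matrix.map_mul, hVU, Matrix.map_one C C.map_zero C.map_one]
  have hcm : charmatrix (fromBlocks (-1 : Matrix (Fin p) (Fin p) ℝ) (S1⁻¹*Bᵀ) (S2⁻¹*B)
      (0 : Matrix (Fin q) (Fin q) ℝ)) =
      fromBlocks (((X:ℝ[X]) + 1) • (1 : Matrix (Fin p) (Fin p) ℝ[X])) (-u) (-v) ((X:ℝ[X]) • (1 : Matrix (Fin q) (Fin q) ℝ[X])) := by
    have c1 : charmatrix (-1 : Matrix (Fin p) (Fin p) ℝ) =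
        ((X:ℝ[X]) + 1) • (1 : Matrix (Fin p) (Fin p) ℝ[X]) := by
      rw [show (-1 : Matrix (Fin p) (Fin p) ℝ) = (-1 : ℝ) • 1 by simp, charmatrix_smul_one]
      norm_num
    have c2 : charmatrix (0 : Matrix (Fin q) (Fin q) ℝ) =
        (X:ℝ[X]) • (1 : Matrix (Fin q) (Fin q) ℝ[X]) := by
      rw [show (0 : Matrix (Fin q) (Fin q) ℝ) = (0 : ℝ) • 1 by simp, charmatrix_smul_one]
      simp
    rw [charmatrix_fromBlocks, c1, c2, hu, hv]
  have key : fromBlocks (((X:ℝ[X]) + 1) • (1 : Matrix (Fin p) (Fin p) ℝ[X])) (-u) (-v) ((X:ℝ[X]) • (1 : Matrix (Fin q) (Fin q) ℝ[X])) *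
      fromBlocks 1 u 0 (((X:ℝ[X]) + 1) • (1 : Matrix (Fin q) (Fin q) ℝ[X])) =
      fromBlocks (((X:ℝ[X]) + 1) • (1 : Matrix (Fin p) (Fin p) ℝ[X])) 0 (-v) (((X:ℝ[X])^2 + X - 1) • (1 : Matrix (Fin q) (Fin q) ℝ[X])) := by
    rw [Matrix.fromBlocks_multiply]
    congr 1 <;> simp [Matrix.smul_mul, Matrix.mul_smul, hvu, smul_smul]
    · rw [show ((X^2 + X - 1 : ℝ[X])) • (1 : Matrix (Fin q) (Fin q) ℝ[X]) =
        (X * (X+1)) • 1 - (1 : ℝ[X]) • 1 by rw [← sub_smul]; ring_nf, one_smul]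
      rw [mul_comm ((X:ℝ[X]) + 1) X]
      abel
  have hX1 : (X + 1 : ℝ[X]) ≠ 0 := by
    simpa using Polynomial.X_add_C_ne_zero (1 : ℝ)
  have hdet : (fromBlocks (((X:ℝ[X]) + 1) • (1 : Matrix (Fin p) (Fin p) ℝ[X])) (-u) (-v)
      ((X:ℝ[X]) • (1 : Matrix (Fin q) (Fin q) ℝ[X]))).det * (X + 1) ^ q =
      ((X + 1) ^ (p - q) * (X^2 + X - 1) ^ q) * (X + 1) ^ q := by
    have e1 : (fromBlocks (1 : Matrix (Fin p) (Fin p) ℝ[X]) u 0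
        (((X:ℝ[X]) + 1) • (1 : Matrix (Fin q) (Fin q) ℝ[X]))).det = (X + 1) ^ q := by
      rw [Matrix.det_fromBlocks_zero₂₁, Matrix.det_one, one_mul, det_smul_one, Fintype.card_fin]
    have e2 : (fromBlocks (((X:ℝ[X]) + 1) • (1 : Matrix (Fin p) (Fin p) ℝ[X])) 0 (-v)
        (((X:ℝ[X])^2 + X - 1) • (1 : Matrix (Fin q) (Fin q) ℝ[X]))).det =
        (X + 1) ^ p * (X^2 + X - 1) ^ q := by
      rw [Matrix.det_fromBlocks_zero₁₂, det_smul_one, det_smul_one, Fintype.card_fin,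
        Fintype.card_fin]
    calc (fromBlocks (((X:ℝ[X]) + 1) • (1 : Matrix (Fin p) (Fin p) ℝ[X])) (-u) (-v) ((X:ℝ[X]) • (1 : Matrix (Fin q) (Fin q) ℝ[X]))).det
          * (X + 1) ^ q
        = (fromBlocks (((X:ℝ[X]) + 1) • (1 : Matrix (Fin p) (Fin p) ℝ[X])) (-u) (-v) ((X:ℝ[X]) • (1 : Matrix (Fin q) (Fin q) ℝ[X]))).det *
            (fromBlocks 1 u 0 (((X:ℝ[X]) + 1) • (1 : Matrix (Fin q) (Fin q) ℝ[X]))).det := by rw [e1]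
      _ = (fromBlocks (((X:ℝ[X]) + 1) • (1 : Matrix (Fin p) (Fin p) ℝ[X])) 0 (-v) (((X:ℝ[X])^2 + X - 1) • (1 : Matrix (Fin q) (Fin q) ℝ[X]))).det := by
            rw [← Matrix.det_mul, key]
      _ = (X + 1) ^ p * (X^2 + X - 1) ^ q := e2
      _ = ((X + 1) ^ (p - q) * (X^2 + X - 1) ^ q) * (X + 1) ^ q := by
            rw [mul_right_comm, ← pow_add, Nat.sub_add_cancel hqp]
  have hcp2 : (fromBlocks (-1 : Matrix (Fin p) (Fin p) ℝ) (S1⁻¹*Bᵀ) (S2⁻¹*B)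
      (0 : Matrix (Fin q) (Fin q) ℝ)).charpoly = (X + 1) ^ (p - q) * (X^2 + X - 1) ^ q := by
    rw [Matrix.charpoly, hcm]
    exact mul_right_cancel₀ (pow_ne_zero q hX1) hdet
  rw [hcp1, hcp2]
  ring
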